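/- Privacy amplification via depolarizing noise (Lemma 4): Let X be a type with adjacency relation Adj, Y a measurable space, and A : X → Measure Y a mechanism of probability measures satisfying (ε, δ)-DP with ε, δ ≥ 0. Let n be a nonempty finite type with d := Fintype.card n, let enc : Y → EuclideanSpace ℂ n be a measurable map with ‖enc y‖ = 1 for all y, and let φ ∈ [0,1] satisfy φ ≤ ‖⟪enc y, enc y'⟫‖² for all y, y' ∈ Y. Let U ∈ Matrix.unitaryGroup n ℂ, let E : Fin m → Matrix n n ℂ be a POVM, and let p ∈ [0,1]. Define the noisy circuit C̃ : Y → Measure (Fin m) by C̃ y := ∑_{i : Fin m} ENNReal.ofReal(Re(Tr(E i * ((1 - p) • (U * ρ_{enc y} * Uᴴ) + (p/d) • 1)))) • Measure.dirac i, where ρ_w := Matrix.vecMulVec w (star w). Then the composed mechanism x ↦ (A x).bind C̃ satisfies (ε, (1 - p) * Real.sqrt(1 - φ) * δ)-differential privacy. -/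

import Mathlib

open MeasureTheory Matrix
open scoped ComplexOrder InnerProductSpace

/-- A mechanism `A : X → Measure Y` (each `A x` a probability measure) satisfies
`(ε, δ)`-differential privacy with respect to the adjacency relation `Adj`. -/
def DiffPrivate {X Y : Type*} [MeasurableSpace Y] (Adj : X → X → Prop)
    (A : X → Measure Y) (ε δ : ℝ) : Prop :=
  ∀ x x', Adj x x' → ∀ S : Set Y, MeasurableSet S →
    A x S ≤ ENNReal.ofReal (Real.exp ε) * A x' S + ENNReal.ofReal δ

/-- The density matrix of the pure state associated with a vector
`w : EuclideanSpace ℂ n`, i.e. the outer product `|w⟩⟨w|`. -/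
noncomputable def pureState {n : Type*} [Fintype n]
    (w : EuclideanSpace ℂ n) : Matrix n n ℂ :=
  Matrix.vecMulVec (w : n → ℂ) (star (w : n → ℂ))

/-- The noisy quantum circuit as a classical mechanism: encode `y`, apply the
unitary `U`, the depolarizing channel with parameter `p`, and measure the POVM
`E`; the result is the distribution over measurement outcomes. -/
noncomputable def noisyCircuit {Y : Type*} {n : Type*} [Fintype n] [DecidableEq n]
    {m : ℕ} (enc : Y → EuclideanSpace ℂ n) (U : Matrix.unitaryGroup n ℂ)
    (E : Fin m → Matrix n n ℂ) (p : ℝ) (y : Y) : Measure (Fin m) :=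
  ∑ i : Fin m,
    ENNReal.ofReal
      ((E i * ((1 - p) • ((U : Matrix n n ℂ) * pureState (enc y) * (U : Matrix n n ℂ)ᴴ)
          + (p / (Fintype.card n : ℝ)) • (1 : Matrix n n ℂ))).trace.re)
      • Measure.dirac i

section PrivAmpHelpers

set_option linter.unusedSectionVars false
set_option maxHeartbeats 1000000

namespace PrivAmp

variable {n : Type*} [Fintype n] [DecidableEq n]

noncomputable def toE (x : n → ℂ) : EuclideanSpace ℂ n := (WithLp.equiv 2 (n → ℂ)).symm x

lemma inner_eq_dot (x y : n → ℂ) : ⟪toE x, toE y⟫_ℂ = star x ⬝ᵥ y := by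
  simp [toE, PiLp.inner_apply, dotProduct, RCLike.inner_apply, mul_comm]

lemma psd_cs {M : Matrix n n ℂ} (hM : M.PosSemidef) (x y : n → ℂ) :
    ‖star x ⬝ᵥ M *ᵥ y‖ ^ 2 ≤ (star x ⬝ᵥ M *ᵥ x).re * (star y ⬝ᵥ M *ᵥ y).re := by
  obtain ⟨B, hB⟩ : ∃ B : Matrix n n ℂ, M = Bᴴ * B := by
    open MatrixOrder in
    obtain ⟨X, hX, -, rfl⟩ :=
      CFC.exists_sqrt_of_isSelfAdjoint_of_quasispectrumRestricts hM.isHermitian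
        (QuasispectrumRestricts.nnreal_of_nonneg hM.nonneg)
    exact ⟨X, by rw [← star_eq_conjTranspose, hX.star_eq]⟩
  have key : ∀ a b : n → ℂ, star a ⬝ᵥ M *ᵥ b = star (B *ᵥ a) ⬝ᵥ (B *ᵥ b) := by
    intro a b
    rw [star_mulVec, ← dotProduct_mulVec, mulVec_mulVec, ← hB]
  have h1 : ∀ a : n → ℂ, (star a ⬝ᵥ M *ᵥ a).re = ‖toE (B *ᵥ a)‖ ^ 2 := by
    intro a
    rw [key, ← inner_eq_dot]
    exact inner_self_eq_norm_sq (𝕜 := ℂ) _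
  have h2 := norm_inner_le_norm (𝕜 := ℂ) (toE (B *ᵥ x)) (toE (B *ᵥ y))
  rw [inner_eq_dot] at h2
  rw [key, h1, h1]
  calc ‖star (B *ᵥ x) ⬝ᵥ B *ᵥ y‖ ^ 2
      ≤ (‖toE (B *ᵥ x)‖ * ‖toE (B *ᵥ y)‖) ^ 2 :=
        pow_le_pow_left₀ (norm_nonneg _) h2 2
    _ = _ := by ring

lemma scalar_bound {s k a b Z : ℝ} (hs : 0 ≤ s) (hk : 0 ≤ k) (hsk : s ^ 2 + k ^ 2 = 1)
    (ha0 : 0 ≤ a) (ha1 : a ≤ 1) (hb0 : 0 ≤ b) (hb1 : b ≤ 1) (hZ : 0 ≤ Z)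
    (hZ1 : Z ^ 2 ≤ a * b) (hZ2 : Z ^ 2 ≤ (1 - a) * (1 - b)) :
    s ^ 2 * (a - b) + 2 * s * k * Z ≤ s := by
  have hmain : s * (a - b) + 2 * k * Z ≤ 1 := by
    have ht : (a - b) ^ 2 + 4 * Z ^ 2 ≤ 1 := by
      rcases le_or_gt (a + b) 1 with h | h
      · nlinarith
      · nlinarith
    nlinarith [sq_nonneg (2 * s * Z - k * (a - b)), sq_nonneg (s * (a - b) + 2 * k * Z - 1),
      sq_nonneg (s * (a - b) + 2 * k * Z + 1), sq_nonneg (s * (a - b) + 2 * k * Z)]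
  calc s ^ 2 * (a - b) + 2 * s * k * Z = s * (s * (a - b) + 2 * k * Z) := by ring
    _ ≤ s * 1 := mul_le_mul_of_nonneg_left hmain hs
    _ = s := mul_one s

lemma quad_diff_le {M : Matrix n n ℂ} (hM : M.PosSemidef) (hM1 : (1 - M).PosSemidef)
    {u v : n → ℂ} (hu : star u ⬝ᵥ u = 1) (hv : star v ⬝ᵥ v = 1) :
    (star u ⬝ᵥ M *ᵥ u).re - (star v ⬝ᵥ M *ᵥ v).re ≤ Real.sqrt (1 - ‖star u ⬝ᵥ v‖ ^ 2) := by
  have hre : ∀ x : n → ℂ, 0 ≤ (star x ⬝ᵥ M *ᵥ x).re := fun x => by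
    simpa using hM.re_dotProduct_nonneg x
  have hone : ∀ x : n → ℂ, (star x ⬝ᵥ M *ᵥ x).re ≤ (star x ⬝ᵥ x).re := fun x => by
    have h0 := hM1.re_dotProduct_nonneg x
    have hx : star x ⬝ᵥ (1 - M) *ᵥ x = star x ⬝ᵥ x - star x ⬝ᵥ M *ᵥ x := by
      rw [sub_mulVec, dotProduct_sub, one_mulVec]
    rw [hx] at h0
    simp only [Complex.sub_re, RCLike.re_to_complex] at h0 ⊢
    linarith
  set c : ℂ := star u ⬝ᵥ v with hc
  have hvu : star v ⬝ᵥ u = star c := by rw [star_dotProduct]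
  have hcc : star c * c = ((‖c‖ ^ 2 : ℝ) : ℂ) := by
    simp [← Complex.normSq_eq_conj_mul_self, Complex.normSq_eq_norm_sq]
  have hnc : ‖c‖ ^ 2 ≤ 1 := by
    have h := psd_cs (M := (1 : Matrix n n ℂ)) Matrix.PosSemidef.one u v
    simp only [Matrix.one_mulVec] at h
    rw [hu, hv, ← hc] at h
    simpa using h
  set s : ℝ := Real.sqrt (1 - ‖c‖ ^ 2) with hsdef
  have hs0 : 0 ≤ s := Real.sqrt_nonneg _
  have hs2 : s ^ 2 = 1 - ‖c‖ ^ 2 := Real.sq_sqrt (by linarith)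
  set w : n → ℂ := v - c • u with hwdef
  have hvw : c • u + w = v := by rw [hwdef]; abel
  have huw : star u ⬝ᵥ w = 0 := by
    rw [hwdef, dotProduct_sub, dotProduct_smul, hu, ← hc, smul_eq_mul, mul_one, sub_self]
  have hwu : star w ⬝ᵥ u = 0 := by rw [star_dotProduct, huw, star_zero]
  have hww : star w ⬝ᵥ w = 1 - star c * c := by
    rw [hwdef]
    simp only [star_sub, star_smul, sub_dotProduct, dotProduct_sub, smul_dotProduct,
      dotProduct_smul, smul_eq_mul, hu, hv, hvu, ← hc]
    ring
  by_cases hw0 : w = 0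
  · have hv' : v = c • u := by rw [← hvw, hw0, add_zero]
    have h2 : star c * c = 1 := by
      have h := hv
      rw [hv', star_smul, smul_dotProduct, dotProduct_smul, hu, smul_eq_mul, smul_eq_mul,
        mul_one] at h
      exact h
    have h1 : star v ⬝ᵥ M *ᵥ v = star u ⬝ᵥ M *ᵥ u := by
      rw [hv', star_smul, smul_dotProduct, mulVec_smul, dotProduct_smul, smul_eq_mul,
        smul_eq_mul, ← mul_assoc, h2, one_mul]
    rw [h1, sub_self]
    exact Real.sqrt_nonneg _
  · have hwwne : star w ⬝ᵥ w ≠ 0 := fun h => hw0 (dotProduct_star_self_eq_zero.mp h)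
    have hcne : (1 - ‖c‖ ^ 2 : ℝ) ≠ 0 := by
      intro h
      apply hwwne
      rw [hww, hcc, ← Complex.ofReal_one, ← Complex.ofReal_sub, h, Complex.ofReal_zero]
    have hcpos : 0 < 1 - ‖c‖ ^ 2 := lt_of_le_of_ne (by linarith) (Ne.symm hcne)
    have hspos : 0 < s := Real.sqrt_pos.mpr hcpos
    have hsne : (s : ℂ) ≠ 0 := by
      simpa using Complex.ofReal_ne_zero.mpr (ne_of_gt hspos)
    set ω : n → ℂ := (s : ℂ)⁻¹ • w with hωdef
    have hωw : (s : ℂ) • ω = w := by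
      rw [hωdef, smul_smul, mul_inv_cancel₀ hsne, one_smul]
    have hωω : star ω ⬝ᵥ ω = 1 := by
      rw [hωdef, star_smul, smul_dotProduct, dotProduct_smul, hww, hcc, smul_eq_mul,
        smul_eq_mul]
      have hst : star ((s : ℂ)⁻¹) = ((s : ℂ))⁻¹ := by
        rw [← Complex.ofReal_inv]
        exact Complex.conj_ofReal _
      rw [hst]
      rw [← Complex.ofReal_one, ← Complex.ofReal_sub, ← hs2]
      field_simp
      norm_cast
      ring
    have huω : star u ⬝ᵥ ω = 0 := by
      rw [hωdef, dotProduct_smul, huw, smul_zero]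
    have hωu : star ω ⬝ᵥ u = 0 := by rw [star_dotProduct, huω, star_zero]
    set a : ℝ := (star u ⬝ᵥ M *ᵥ u).re with ha
    set b : ℝ := (star ω ⬝ᵥ M *ᵥ ω).re with hb
    set z : ℂ := star u ⬝ᵥ M *ᵥ ω with hz
    have ha0 : 0 ≤ a := hre u
    have ha1 : a ≤ 1 := by have := hone u; rw [hu] at this; simpa using this
    have hb0 : 0 ≤ b := hre ω
    have hb1 : b ≤ 1 := by have := hone ω; rw [hωω] at this; simpa using this
    have hz1 : ‖z‖ ^ 2 ≤ a * b := psd_cs hM u ω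
    have hz2 : ‖z‖ ^ 2 ≤ (1 - a) * (1 - b) := by
      have h := psd_cs hM1 u ω
      have e1 : star u ⬝ᵥ (1 - M) *ᵥ ω = -z := by
        rw [sub_mulVec, dotProduct_sub, one_mulVec, huω, zero_sub]
      have e2 : star u ⬝ᵥ (1 - M) *ᵥ u = star u ⬝ᵥ u - star u ⬝ᵥ M *ᵥ u := by
        rw [sub_mulVec, dotProduct_sub, one_mulVec]
      have e3 : star ω ⬝ᵥ (1 - M) *ᵥ ω = star ω ⬝ᵥ ω - star ω ⬝ᵥ M *ᵥ ω := by
        rw [sub_mulVec, dotProduct_sub, one_mulVec]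
      rw [e1, e2, e3, hu, hωω, norm_neg] at h
      simpa using h
    have h1 : star (M *ᵥ ω) ⬝ᵥ u = star z := by
      rw [star_dotProduct, ← hz]
    have hωMu : star ω ⬝ᵥ M *ᵥ u = star z := by
      rw [← h1, star_mulVec, hM.1.eq, dotProduct_mulVec]
    have hexp : star v ⬝ᵥ M *ᵥ v
        = (star c * c) * (star u ⬝ᵥ M *ᵥ u) + ((s:ℂ) * (s:ℂ)) * (star ω ⬝ᵥ M *ᵥ ω)
          + (s:ℂ) * (star c * z + c * star z) := by
      rw [← hvw, ← hωw]
      simp only [star_add, star_smul, add_dotProduct, mulVec_add, mulVec_smul, dotProduct_add,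
        dotProduct_smul, smul_dotProduct, smul_eq_mul, hωMu, ← hz, Complex.star_def,
        Complex.conj_ofReal]
      ring
    have hrev : (star v ⬝ᵥ M *ᵥ v).re = ‖c‖ ^ 2 * a + s ^ 2 * b + s * (2 * (star c * z).re) := by
      rw [hexp, hcc]
      have h2 : c * star z = star (star c * z) := by
        rw [StarMul.star_mul, star_star, mul_comm]
      rw [h2]
      simp only [Complex.add_re, Complex.mul_re, Complex.ofReal_re, Complex.ofReal_im,
        Complex.add_im, Complex.mul_im, Complex.star_def, Complex.conj_re, Complex.conj_im,
        ← ha, ← hb]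
      ring
    have htre : -(2 * (star c * z).re) ≤ 2 * (‖c‖ * ‖z‖) := by
      have h1' : |(star c * z).re| ≤ ‖star c * z‖ := Complex.abs_re_le_norm _
      have h2' : ‖star c * z‖ = ‖c‖ * ‖z‖ := by rw [norm_mul, norm_star]
      rw [h2'] at h1'
      have := neg_abs_le ((star c * z).re)
      linarith
    have hfinal := scalar_bound hs0 (norm_nonneg c) (by linarith : s ^ 2 + ‖c‖ ^ 2 = 1)
      ha0 ha1 hb0 hb1 (norm_nonneg z) hz1 hz2
    have h3 : s * (-(2 * (star c * z).re)) ≤ s * (2 * (‖c‖ * ‖z‖)) :=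
      mul_le_mul_of_nonneg_left htre hs0
    rw [hrev, show ‖c‖ ^ 2 = 1 - s ^ 2 by linarith]
    nlinarith [hfinal, h3]

lemma conj_vecMulVec (U : Matrix n n ℂ) (w : n → ℂ) :
    U * vecMulVec w (star w) * Uᴴ = vecMulVec (U *ᵥ w) (star (U *ᵥ w)) := by
  ext i j
  simp only [mul_apply, vecMulVec_apply, conjTranspose_apply, mulVec, dotProduct, Pi.star_apply,
    Finset.sum_mul, Finset.mul_sum, star_sum, star_mul']
  exact Finset.sum_congr rfl fun k _ => Finset.sum_congr rfl fun l _ => by ring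

lemma unitary_dot (U : Matrix.unitaryGroup n ℂ) (a b : n → ℂ) :
    star ((U : Matrix n n ℂ) *ᵥ a) ⬝ᵥ ((U : Matrix n n ℂ) *ᵥ b) = star a ⬝ᵥ b := by
  rw [star_mulVec, dotProduct_mulVec, vecMul_vecMul, ← Matrix.star_eq_conjTranspose,
    Matrix.UnitaryGroup.star_mul_self, vecMul_one]

lemma trace_mul_vecMulVec (M : Matrix n n ℂ) (w : n → ℂ) :
    (M * vecMulVec w (star w)).trace = star w ⬝ᵥ M *ᵥ w := by
  simp only [trace, diag_apply, mul_apply, vecMulVec_apply, dotProduct, mulVec, Pi.star_apply,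
    Finset.mul_sum]
  exact Finset.sum_congr rfl fun i _ => Finset.sum_congr rfl fun j _ => by ring

lemma psd_trace_re_nonneg {M : Matrix n n ℂ} (hM : M.PosSemidef) : 0 ≤ M.trace.re := by
  have h : ∀ i, 0 ≤ (M i i).re := fun i => by
    have h := hM.re_dotProduct_nonneg (Pi.single i 1)
    simpa [dotProduct, mulVec, Pi.single_apply] using h
  rw [Matrix.trace, Complex.re_sum]
  exact Finset.sum_nonneg fun i _ => h i

lemma psd_sum {ι : Type*} (s : Finset ι) (F : ι → Matrix n n ℂ)
    (h : ∀ i ∈ s, (F i).PosSemidef) : (∑ i ∈ s, F i).PosSemidef :=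
  Finset.sum_induction F _ (fun _ _ ha hb => ha.add hb) Matrix.PosSemidef.zero h

lemma trace_expand (M : Matrix n n ℂ) (U : Matrix.unitaryGroup n ℂ) (w : n → ℂ) (r q : ℝ) :
    ((M * (r • ((U : Matrix n n ℂ) * vecMulVec w (star w) * (U : Matrix n n ℂ)ᴴ)
      + q • (1 : Matrix n n ℂ))).trace).re
    = r * (star ((U : Matrix n n ℂ) *ᵥ w) ⬝ᵥ M *ᵥ ((U : Matrix n n ℂ) *ᵥ w)).re
      + q * M.trace.re := by
  rw [conj_vecMulVec, mul_add, trace_add, Complex.add_re, Matrix.mul_smul, trace_smul,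
    Matrix.mul_smul, mul_one, trace_smul, trace_mul_vecMulVec]
  simp [Complex.real_smul, Complex.re_ofReal_mul]

end PrivAmp

end PrivAmpHelpers

/-- Lemma 4: privacy amplification via depolarizing noise. -/
theorem privacy_amplification_depolarizing
    {X Y : Type*} [MeasurableSpace Y]
    (Adj : X → X → Prop) (ε δ : ℝ) (hε : 0 ≤ ε) (hδ : 0 ≤ δ)
    (A : X → Measure Y) (hA : ∀ x, IsProbabilityMeasure (A x))
    (hADP : DiffPrivate Adj A ε δ)
    {n : Type*} [Fintype n] [DecidableEq n] [Nonempty n] {m : ℕ}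
    [MeasurableSpace (EuclideanSpace ℂ n)] [BorelSpace (EuclideanSpace ℂ n)]
    (enc : Y → EuclideanSpace ℂ n) (henc : Measurable enc)
    (hencNorm : ∀ y, ‖enc y‖ = 1)
    (φ : ℝ) (hφ0 : 0 ≤ φ) (hφ1 : φ ≤ 1)
    (hφle : ∀ y y' : Y, φ ≤ ‖⟪enc y, enc y'⟫_ℂ‖ ^ 2)
    (U : Matrix.unitaryGroup n ℂ)
    (E : Fin m → Matrix n n ℂ) (hE : ∀ i, (E i).PosSemidef)
    (hEsum : ∑ i, E i = 1)
    (p : ℝ) (hp0 : 0 ≤ p) (hp1 : p ≤ 1) :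
    DiffPrivate Adj (fun x => (A x).bind (noisyCircuit enc U E p))
      ε ((1 - p) * Real.sqrt (1 - φ) * δ) := by
  classical
  intro x x' hxx' S hS
  set q : ℝ := p / (Fintype.card n : ℝ) with hqdef
  have hq0 : 0 ≤ q := div_nonneg hp0 (Nat.cast_nonneg _)
  have hp1' : 0 ≤ 1 - p := by linarith
  -- the density matrix produced on input y
  have hρ : ∀ (N : Matrix n n ℂ) (y : Y),
      ((N * ((1 - p) • ((U : Matrix n n ℂ) * pureState (enc y) * (U : Matrix n n ℂ)ᴴ)
        + q • (1 : Matrix n n ℂ))).trace).re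
      = (1 - p) * (star ((U : Matrix n n ℂ) *ᵥ (enc y : n → ℂ)) ⬝ᵥ
            N *ᵥ ((U : Matrix n n ℂ) *ᵥ (enc y : n → ℂ))).re
        + q * N.trace.re := by
    intro N y
    rw [pureState, PrivAmp.trace_expand]
  -- unit vectors
  have hunit : ∀ y : Y, star ((U : Matrix n n ℂ) *ᵥ (enc y : n → ℂ)) ⬝ᵥ
      ((U : Matrix n n ℂ) *ᵥ (enc y : n → ℂ)) = 1 := by
    intro y
    rw [PrivAmp.unitary_dot]
    have h2 : ⟪enc y, enc y⟫_ℂ = 1 := by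
      rw [inner_self_eq_norm_sq_to_K, hencNorm y]
      norm_num
    rw [← PrivAmp.inner_eq_dot]
    exact h2
  -- nonnegativity of the single-outcome densities
  have hf0 : ∀ (i : Fin m) (y : Y),
      0 ≤ ((E i * ((1 - p) • ((U : Matrix n n ℂ) * pureState (enc y) * (U : Matrix n n ℂ)ᴴ)
        + q • (1 : Matrix n n ℂ))).trace).re := by
    intro i y
    rw [hρ]
    have h1 : 0 ≤ (star ((U : Matrix n n ℂ) *ᵥ (enc y : n → ℂ)) ⬝ᵥ
        E i *ᵥ ((U : Matrix n n ℂ) *ᵥ (enc y : n → ℂ))).re := by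
      simpa using (hE i).re_dotProduct_nonneg ((U : Matrix n n ℂ) *ᵥ (enc y : n → ℂ))
    have h2 := PrivAmp.psd_trace_re_nonneg (hE i)
    have := mul_nonneg hp1' h1
    have := mul_nonneg hq0 h2
    linarith
  -- measurability of the densities
  have hmeasF : ∀ N : Matrix n n ℂ, Measurable fun y : Y =>
      ((N * ((1 - p) • ((U : Matrix n n ℂ) * pureState (enc y) * (U : Matrix n n ℂ)ᴴ)
        + q • (1 : Matrix n n ℂ))).trace).re := by
    intro N
    have hcoord : ∀ i : n, Continuous fun u : EuclideanSpace ℂ n => (u : n → ℂ) i :=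
      fun i => (continuous_apply i).comp (PiLp.continuous_ofLp 2 (fun _ : n => ℂ))
    have hps : Continuous fun u : EuclideanSpace ℂ n => pureState u := by
      apply continuous_matrix
      intro i j
      simp only [pureState, vecMulVec_apply, Pi.star_apply]
      exact (hcoord i).mul (Complex.continuous_conj.comp (hcoord j))
    have hcont : Continuous fun u : EuclideanSpace ℂ n =>
        ((N * ((1 - p) • ((U : Matrix n n ℂ) * pureState u * (U : Matrix n n ℂ)ᴴ)
          + q • (1 : Matrix n n ℂ))).trace).re := by
      apply Complex.continuous_re.comp
      apply Continuous.matrix_trace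
      apply Continuous.matrix_mul continuous_const
      apply Continuous.add
      · exact (((continuous_const.matrix_mul hps).matrix_mul continuous_const).const_smul (1 - p))
      · exact continuous_const
    exact hcont.measurable.comp henc
  -- value of the noisy circuit on a set
  have hker : ∀ (s : Set (Fin m)) (y : Y), noisyCircuit enc U E p y s
      = ENNReal.ofReal (∑ i ∈ Finset.univ.filter (· ∈ s),
          ((E i * ((1 - p) • ((U : Matrix n n ℂ) * pureState (enc y) * (U : Matrix n n ℂ)ᴴ)
            + q • (1 : Matrix n n ℂ))).trace).re) := by
    intro s y
    rw [noisyCircuit]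
    rw [Measure.finset_sum_apply]
    rw [ENNReal.ofReal_sum_of_nonneg (fun i _ => hf0 i y)]
    rw [Finset.sum_filter]
    congr 1
    ext i
    rw [Measure.smul_apply, smul_eq_mul, Measure.dirac_apply' _ (MeasurableSet.of_discrete)]
    by_cases hi : i ∈ s
    · simp [hi, Set.indicator_of_mem hi, hqdef]
    · simp [hi, Set.indicator_of_notMem hi, hqdef]
  -- measurability of the kernel
  have hkmeas : Measurable (noisyCircuit enc U E p) := by
    apply Measure.measurable_of_measurable_coe
    intro s hs
    simp only [hker s]
    exact ENNReal.measurable_ofReal.comp (Finset.measurable_sum _ fun i _ => hmeasF (E i))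
  -- matrix of the measured event
  set ES : Matrix n n ℂ := ∑ i ∈ Finset.univ.filter (· ∈ S), E i with hESdef
  have hESpsd : ES.PosSemidef := PrivAmp.psd_sum _ _ fun i _ => hE i
  have hES1 : ((1 : Matrix n n ℂ) - ES).PosSemidef := by
    have hsplit : ES + ∑ i ∈ Finset.univ.filter (fun i => ¬ i ∈ S), E i = 1 := by
      rw [hESdef, Finset.sum_filter_add_sum_filter_not]
      exact hEsum
    have h1 : (1 : Matrix n n ℂ) - ES = ∑ i ∈ Finset.univ.filter (fun i => ¬ i ∈ S), E i := by
      rw [← hsplit, add_sub_cancel_left]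
    rw [h1]
    exact PrivAmp.psd_sum _ _ fun i _ => hE i
  -- the payoff function
  set g : Y → ℝ := fun y =>
    ((ES * ((1 - p) • ((U : Matrix n n ℂ) * pureState (enc y) * (U : Matrix n n ℂ)ᴴ)
      + q • (1 : Matrix n n ℂ))).trace).re with hgdef
  have hgsum : ∀ y : Y, ∑ i ∈ Finset.univ.filter (· ∈ S),
      ((E i * ((1 - p) • ((U : Matrix n n ℂ) * pureState (enc y) * (U : Matrix n n ℂ)ᴴ)
        + q • (1 : Matrix n n ℂ))).trace).re = g y := by
    intro y
    rw [hgdef]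
    simp only [hESdef, Finset.sum_mul, trace_sum, Complex.re_sum]
  have hgmeas : Measurable g := hmeasF ES
  have hg0 : ∀ y, 0 ≤ g y := fun y => by
    rw [← hgsum y]
    exact Finset.sum_nonneg fun i _ => hf0 i y
  -- the Lipschitz-style key bound
  set γ : ℝ := (1 - p) * Real.sqrt (1 - φ) with hγdef
  have hγ0 : 0 ≤ γ := mul_nonneg hp1' (Real.sqrt_nonneg _)
  have hkey : ∀ y y' : Y, g y - g y' ≤ γ := by
    intro y y'
    simp only [hgdef]
    rw [hρ ES y, hρ ES y']
    have hdot : star ((U : Matrix n n ℂ) *ᵥ (enc y : n → ℂ)) ⬝ᵥ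
        ((U : Matrix n n ℂ) *ᵥ (enc y' : n → ℂ)) = star (enc y : n → ℂ) ⬝ᵥ (enc y' : n → ℂ) :=
      PrivAmp.unitary_dot U _ _
    have hq := PrivAmp.quad_diff_le hESpsd hES1 (hunit y) (hunit y')
    rw [hdot] at hq
    have hφ' : φ ≤ ‖star (enc y : n → ℂ) ⬝ᵥ (enc y' : n → ℂ)‖ ^ 2 := by
      rw [← PrivAmp.inner_eq_dot]
      exact hφle y y'
    have hsq : Real.sqrt (1 - ‖star (enc y : n → ℂ) ⬝ᵥ (enc y' : n → ℂ)‖ ^ 2)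
        ≤ Real.sqrt (1 - φ) := Real.sqrt_le_sqrt (by linarith)
    have := mul_le_mul_of_nonneg_left (hq.trans hsq) hp1'
    rw [hγdef]
    nlinarith [this]
  -- rewrite the bind as an integral of g
  have hbind : ∀ μ : Measure Y, (μ.bind (noisyCircuit enc U E p)) S
      = ∫⁻ y, ENNReal.ofReal (g y) ∂μ := by
    intro μ
    rw [Measure.bind_apply hS hkmeas.aemeasurable]
    apply lintegral_congr
    intro y
    rw [hker S y, hgsum y]
  simp only [hbind]
  -- Y is nonempty
  have hY : Nonempty Y := by
    by_contra h
    have h1 : (A x) Set.univ = 1 := (hA x).measure_univ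
    rw [Set.univ_eq_empty_iff.mpr (not_nonempty_iff.mp h), measure_empty] at h1
    exact zero_ne_one h1
  -- infimum of g
  set c : ℝ := sInf (Set.range g) with hcdef
  have hbdd : BddBelow (Set.range g) := by
    refine ⟨0, fun r hr => ?_⟩
    obtain ⟨y, hy⟩ := hr
    exact hy ▸ hg0 y
  have hcle : ∀ y, c ≤ g y := fun y => csInf_le hbdd (Set.mem_range_self y)
  have hc0 : 0 ≤ c := by
    apply le_csInf (Set.range_nonempty g)
    rintro r ⟨y, hy⟩
    exact hy ▸ hg0 y
  have hcγ : ∀ y, g y ≤ c + γ := by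
    intro y
    have h1 : g y - γ ≤ c := by
      apply le_csInf (Set.range_nonempty g)
      rintro r ⟨y', hy'⟩
      subst hy'
      linarith [hkey y y']
    linarith
  have hhmeas : Measurable fun y => g y - c := hgmeas.sub measurable_const
  -- split off the constant part
  have hsplitInt : ∀ μ : Measure Y, IsProbabilityMeasure μ →
      ∫⁻ y, ENNReal.ofReal (g y) ∂μ
        = ENNReal.ofReal c + ∫⁻ y, ENNReal.ofReal (g y - c) ∂μ := by
    intro μ hμ
    haveI := hμ
    calc ∫⁻ y, ENNReal.ofReal (g y) ∂μ
        = ∫⁻ y, (ENNReal.ofReal c + ENNReal.ofReal (g y - c)) ∂μ := by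
          apply lintegral_congr
          intro y
          rw [← ENNReal.ofReal_add hc0 (by linarith [hcle y])]
          congr 1
          ring
      _ = ENNReal.ofReal c + ∫⁻ y, ENNReal.ofReal (g y - c) ∂μ := by
          rw [lintegral_add_left measurable_const, lintegral_const, measure_univ, mul_one]
  -- the core layer-cake estimate
  have hcore : ∫⁻ y, ENNReal.ofReal (g y - c) ∂(A x)
      ≤ ENNReal.ofReal (Real.exp ε) * ∫⁻ y, ENNReal.ofReal (g y - c) ∂(A x')
        + ENNReal.ofReal γ * ENNReal.ofReal δ := by
    have hlc : ∀ μ : Measure Y, ∫⁻ y, ENNReal.ofReal (g y - c) ∂μ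
        = ∫⁻ t in Set.Ioc (0:ℝ) γ, μ {a | t ≤ g a - c} := by
      intro μ
      rw [lintegral_eq_lintegral_meas_le μ (ae_of_all _ fun y => sub_nonneg.mpr (hcle y))
        hhmeas.aemeasurable]
      have h1 : ∫⁻ t in Set.Ioi (0:ℝ), μ {a | t ≤ g a - c}
          = ∫⁻ t in Set.Ioi (0:ℝ),
            (Set.Ioc (0:ℝ) γ).indicator (fun t => μ {a | t ≤ g a - c}) t := by
        apply setLIntegral_congr_fun measurableSet_Ioi
        intro t ht
        by_cases htγ : t ≤ γ
        · rw [Set.indicator_of_mem (Set.mem_Ioc.mpr ⟨Set.mem_Ioi.mp ht, htγ⟩)]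
        · rw [Set.indicator_of_notMem fun hmem => htγ hmem.2]
          have hempty : {a : Y | t ≤ g a - c} = ∅ := by
            ext a
            simp only [Set.mem_setOf_eq, Set.mem_empty_iff_false, iff_false, not_le]
            have := hcγ a
            linarith [not_le.mp htγ]
          simp only [hempty, measure_empty]
      rw [h1, lintegral_indicator measurableSet_Ioc, Measure.restrict_restrict measurableSet_Ioc,
        Set.inter_eq_self_of_subset_left Set.Ioc_subset_Ioi_self]
    rw [hlc (A x), hlc (A x')]
    calc ∫⁻ t in Set.Ioc (0:ℝ) γ, (A x) {a | t ≤ g a - c}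
        ≤ ∫⁻ t in Set.Ioc (0:ℝ) γ,
            (ENNReal.ofReal (Real.exp ε) * (A x') {a | t ≤ g a - c} + ENNReal.ofReal δ) := by
          apply lintegral_mono
          intro t
          exact hADP x x' hxx' _ (measurableSet_le measurable_const hhmeas)
      _ = ENNReal.ofReal (Real.exp ε) * (∫⁻ t in Set.Ioc (0:ℝ) γ, (A x') {a | t ≤ g a - c})
            + ENNReal.ofReal δ * volume (Set.Ioc (0:ℝ) γ) := by
          rw [lintegral_add_right _ measurable_const, lintegral_const,
            lintegral_const_mul' _ _ ENNReal.ofReal_ne_top, Measure.restrict_apply_univ]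
      _ ≤ ENNReal.ofReal (Real.exp ε) * (∫⁻ t in Set.Ioc (0:ℝ) γ, (A x') {a | t ≤ g a - c})
            + ENNReal.ofReal γ * ENNReal.ofReal δ := by
          apply add_le_add_right
          rw [Real.volume_Ioc, sub_zero, mul_comm]
  rw [hsplitInt (A x) (hA x), hsplitInt (A x') (hA x')]
  have h1le : (1 : ENNReal) ≤ ENNReal.ofReal (Real.exp ε) := by
    rw [← ENNReal.ofReal_one]
    exact ENNReal.ofReal_le_ofReal (Real.one_le_exp hε)
  calc ENNReal.ofReal c + ∫⁻ y, ENNReal.ofReal (g y - c) ∂(A x)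
      ≤ ENNReal.ofReal c + (ENNReal.ofReal (Real.exp ε)
            * ∫⁻ y, ENNReal.ofReal (g y - c) ∂(A x')
          + ENNReal.ofReal γ * ENNReal.ofReal δ) := add_le_add_right hcore _
    _ ≤ (ENNReal.ofReal (Real.exp ε) * ENNReal.ofReal c
          + ENNReal.ofReal (Real.exp ε) * ∫⁻ y, ENNReal.ofReal (g y - c) ∂(A x'))
          + ENNReal.ofReal γ * ENNReal.ofReal δ := by
        rw [← add_assoc]
        exact add_le_add_left
          (add_le_add_left (le_mul_of_one_le_left zero_le h1le) _) _
    _ = ENNReal.ofReal (Real.exp ε)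
          * (ENNReal.ofReal c + ∫⁻ y, ENNReal.ofReal (g y - c) ∂(A x'))
          + ENNReal.ofReal (γ * δ) := by
        rw [mul_add, ENNReal.ofReal_mul hγ0]
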